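/- If two MDPs M and M̂ share reward r and all value functions satisfy ‖V^π_M‖_∞ ≤ δ, then for any policy π, |J(π, M) − J(π, M̂)| ≤ (2γδ/(1−γ)) · E_{(s,a)∼ρ^π_{M̂}} [ d_TV(T(·|s,a), T̂(·|s,a)) ]. -/

import Mathlib

open scoped BigOperators

/-- A Markov decision process on finite state space `S` and action space `A`,
with reward `r`, transition kernel `T` (as a function giving next-state probabilities),
and discount factor `γ`. -/
structure MDP (S A : Type*) where
  r : S → A → ℝ
  T : S → A → S → ℝ
  γ : ℝ

variable {S A : Type*} [Fintype S] [Fintype A] [DecidableEq S]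

/-- `π` is a stationary stochastic policy: `π s` is a probability distribution over actions. -/
def IsPolicy (π : S → A → ℝ) : Prop :=
  (∀ s a, 0 ≤ π s a) ∧ ∀ s, ∑ a, π s a = 1

/-- `T` is a transition kernel: `T s a` is a probability distribution over next states. -/
def IsKernel (T : S → A → S → ℝ) : Prop :=
  (∀ s a s', 0 ≤ T s a s') ∧ ∀ s a, ∑ s', T s a s' = 1

/-- `μ` is a probability distribution on states. -/
def IsDist (μ : S → ℝ) : Prop :=
  (∀ s, 0 ≤ μ s) ∧ ∑ s, μ s = 1

/-- `stateDist M π μ₀ t s` is the probability `P^π_{M,t}(s)` that the state at time `t`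
equals `s` when executing policy `π` in MDP `M` from initial distribution `μ₀`. -/
noncomputable def stateDist (M : MDP S A) (π : S → A → ℝ) (μ₀ : S → ℝ) : ℕ → S → ℝ
  | 0 => μ₀
  | t + 1 => fun s' => ∑ s, ∑ a, stateDist M π μ₀ t s * π s a * M.T s a s'

/-- Expected reward at time `t` under policy `π` in MDP `M` started from `μ₀`. -/
noncomputable def expRewardAt (M : MDP S A) (π : S → A → ℝ) (μ₀ : S → ℝ) (t : ℕ) : ℝ :=
  ∑ s, ∑ a, stateDist M π μ₀ t s * π s a * M.r s a

/-- Value function `V^π_M(s) = E[∑_t γ^t r(s_t,a_t) | s₀ = s]`. -/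
noncomputable def Vval (M : MDP S A) (π : S → A → ℝ) (s : S) : ℝ :=
  ∑' t : ℕ, M.γ ^ t * expRewardAt M π (fun x => if x = s then (1 : ℝ) else 0) t

/-- Expected discounted return `J(π, M) = E_{s ∼ μ₀}[V^π_M(s)]`. -/
noncomputable def Jval (M : MDP S A) (π : S → A → ℝ) (μ₀ : S → ℝ) : ℝ :=
  ∑ s, μ₀ s * Vval M π s

/-- Normalized discounted occupancy measure
`ρ^π_M(s,a) = (1-γ) ∑_t γ^t P^π_{M,t}(s) π(a|s)`. -/
noncomputable def occupancy (M : MDP S A) (π : S → A → ℝ) (μ₀ : S → ℝ) (s : S) (a : A) : ℝ :=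
  (1 - M.γ) * (∑' t : ℕ, M.γ ^ t * stateDist M π μ₀ t s) * π s a

/-- Total variation distance between finite distributions: `sup_E |p(E) - q(E)|`. -/
noncomputable def tvFin {X : Type*} [Fintype X] (p q : X → ℝ) : ℝ :=
  ⨆ E : Finset X, |∑ x ∈ E, p x - ∑ x ∈ E, q x|

section AuxLemmas

open Finset

variable {S A : Type*} [Fintype S] [Fintype A] [DecidableEq S]

lemma sum_rotate {α β γ : Type*} [Fintype α] [Fintype β] [Fintype γ] (f : α → β → γ → ℝ) :
    ∑ a, ∑ b, ∑ c, f a b c = ∑ c, ∑ a, ∑ b, f a b c := by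
  calc ∑ a, ∑ b, ∑ c, f a b c
      = ∑ a, ∑ c, ∑ b, f a b c := Finset.sum_congr rfl fun a _ => Finset.sum_comm
    _ = ∑ c, ∑ a, ∑ b, f a b c := Finset.sum_comm

lemma triple_swap (f : S → A → S → ℝ) :
    ∑ s', ∑ s, ∑ a, f s a s' = ∑ s, ∑ a, ∑ s', f s a s' :=
  (sum_rotate f).symm

/-- One-step pushforward of a state distribution. -/
noncomputable def mdpPush (M : MDP S A) (π : S → A → ℝ) (μ : S → ℝ) : S → ℝ :=
  fun s' => ∑ s, ∑ a, μ s * π s a * M.T s a s'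

lemma stateDist_succ (M : MDP S A) (π : S → A → ℝ) (μ : S → ℝ) (t : ℕ) :
    stateDist M π μ (t + 1) = mdpPush M π (stateDist M π μ t) := rfl

lemma stateDist_shift (M : MDP S A) (π : S → A → ℝ) (μ : S → ℝ) (t : ℕ) :
    stateDist M π μ (t + 1) = stateDist M π (mdpPush M π μ) t := by
  induction t with
  | zero => rfl
  | succ t ih =>
      have h : stateDist M π μ (t + 2) = mdpPush M π (stateDist M π μ (t + 1)) := rfl
      rw [h, ih]; rfl

lemma isDist_le_one {μ : S → ℝ} (hμ : IsDist μ) (s : S) : μ s ≤ 1 := by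
  have := Finset.single_le_sum (f := μ) (fun i _ => hμ.1 i) (Finset.mem_univ s)
  rw [hμ.2] at this; exact this

lemma policy_le_one {π : S → A → ℝ} (hπ : IsPolicy π) (s : S) (a : A) : π s a ≤ 1 := by
  have := Finset.single_le_sum (f := π s) (fun i _ => hπ.1 s i) (Finset.mem_univ a)
  rw [hπ.2 s] at this; exact this

lemma mdpPush_isDist {M : MDP S A} {π : S → A → ℝ} {μ : S → ℝ}
    (hπ : IsPolicy π) (hT : IsKernel M.T) (hμ : IsDist μ) : IsDist (mdpPush M π μ) := by
  constructor
  · intro s'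
    exact Finset.sum_nonneg fun s _ => Finset.sum_nonneg fun a _ =>
      mul_nonneg (mul_nonneg (hμ.1 s) (hπ.1 s a)) (hT.1 s a s')
  · unfold mdpPush
    rw [triple_swap (fun s a s' => μ s * π s a * M.T s a s')]
    have h1 : ∀ s a, ∑ s', μ s * π s a * M.T s a s' = μ s * π s a := by
      intro s a
      rw [← Finset.mul_sum, hT.2 s a, mul_one]
    calc ∑ s, ∑ a, ∑ s', μ s * π s a * M.T s a s'
        = ∑ s, ∑ a, μ s * π s a := by
          exact Finset.sum_congr rfl fun s _ => Finset.sum_congr rfl fun a _ => h1 s a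
      _ = ∑ s, μ s := by
          refine Finset.sum_congr rfl fun s _ => ?_
          rw [← Finset.mul_sum, hπ.2 s, mul_one]
      _ = 1 := hμ.2

lemma stateDist_isDist {M : MDP S A} {π : S → A → ℝ} {μ : S → ℝ}
    (hπ : IsPolicy π) (hT : IsKernel M.T) (hμ : IsDist μ) (t : ℕ) :
    IsDist (stateDist M π μ t) := by
  induction t with
  | zero => exact hμ
  | succ t ih => rw [stateDist_succ]; exact mdpPush_isDist hπ hT ih

lemma expRewardAt_abs_le {M : MDP S A} {π : S → A → ℝ} {μ : S → ℝ}
    (hπ : IsPolicy π) (hT : IsKernel M.T) (hμ : IsDist μ) (t : ℕ) :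
    |expRewardAt M π μ t| ≤ ∑ s, ∑ a, |M.r s a| := by
  have hd := stateDist_isDist hπ hT hμ t
  unfold expRewardAt
  calc |∑ s, ∑ a, stateDist M π μ t s * π s a * M.r s a|
      ≤ ∑ s, |∑ a, stateDist M π μ t s * π s a * M.r s a| := Finset.abs_sum_le_sum_abs _ _
    _ ≤ ∑ s, ∑ a, |stateDist M π μ t s * π s a * M.r s a| := by
        exact Finset.sum_le_sum fun s _ => Finset.abs_sum_le_sum_abs _ _
    _ ≤ ∑ s, ∑ a, |M.r s a| := by
        refine Finset.sum_le_sum fun s _ => Finset.sum_le_sum fun a _ => ?_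
        rw [abs_mul, abs_mul, abs_of_nonneg (hd.1 s), abs_of_nonneg (hπ.1 s a)]
        have h01 : stateDist M π μ t s * π s a ≤ 1 :=
          mul_le_one₀ (isDist_le_one hd s) (hπ.1 s a) (policy_le_one hπ s a)
        exact mul_le_of_le_one_left (abs_nonneg _) h01

lemma summable_expReward {M : MDP S A} {π : S → A → ℝ} {μ : S → ℝ} {c : ℝ}
    (hπ : IsPolicy π) (hT : IsKernel M.T) (hμ : IsDist μ) (hc0 : 0 ≤ c) (hc1 : c < 1) :
    Summable (fun t => c ^ t * expRewardAt M π μ t) := by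
  refine Summable.of_norm_bounded (g := fun t => (∑ s, ∑ a, |M.r s a|) * c ^ t)
    ((summable_geometric_of_lt_one hc0 hc1).mul_left _) (fun t => ?_)
  rw [Real.norm_eq_abs, abs_mul, abs_pow, abs_of_nonneg hc0, mul_comm]
  exact mul_le_mul_of_nonneg_right (expRewardAt_abs_le hπ hT hμ t) (pow_nonneg hc0 t)

/-- The discounted return functional from initial distribution `μ`. -/
noncomputable def Gv (M : MDP S A) (π : S → A → ℝ) (μ : S → ℝ) : ℝ :=
  ∑' t : ℕ, M.γ ^ t * expRewardAt M π μ t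

lemma Vval_eq_Gv (M : MDP S A) (π : S → A → ℝ) (s : S) :
    Vval M π s = Gv M π (fun x => if x = s then (1 : ℝ) else 0) := rfl

lemma delta_isDist (s : S) : IsDist (fun x => if x = s then (1 : ℝ) else 0) := by
  constructor
  · intro x; by_cases h : x = s <;> simp [h]
  · simp

lemma stateDist_linear (M : MDP S A) (π : S → A → ℝ) (μ : S → ℝ) (t : ℕ) (s' : S) :
    stateDist M π μ t s' =
      ∑ s₀, μ s₀ * stateDist M π (fun x => if x = s₀ then (1 : ℝ) else 0) t s' := by
  induction t generalizing s' with
  | zero => simp [stateDist, mul_ite]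
  | succ t ih =>
      show ∑ s, ∑ a, stateDist M π μ t s * π s a * M.T s a s' = _
      have hre : ∀ s₀ : S, μ s₀ * stateDist M π (fun x => if x = s₀ then (1:ℝ) else 0) (t+1) s'
          = ∑ s, ∑ a, μ s₀ * (stateDist M π (fun x => if x = s₀ then (1:ℝ) else 0) t s
              * π s a * M.T s a s') := by
        intro s₀
        show μ s₀ * (∑ s, ∑ a, stateDist M π (fun x => if x = s₀ then (1:ℝ) else 0) t s
              * π s a * M.T s a s') = _
        rw [Finset.mul_sum]
        exact Finset.sum_congr rfl fun s _ => by rw [Finset.mul_sum]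
      calc ∑ s, ∑ a, stateDist M π μ t s * π s a * M.T s a s'
          = ∑ s, ∑ a, ∑ s₀, μ s₀ * (stateDist M π (fun x => if x = s₀ then (1:ℝ) else 0) t s
              * π s a * M.T s a s') := by
            refine Finset.sum_congr rfl fun s _ => Finset.sum_congr rfl fun a _ => ?_
            rw [ih s, Finset.sum_mul, Finset.sum_mul]
            exact Finset.sum_congr rfl fun s₀ _ => by ring
        _ = ∑ s₀, ∑ s, ∑ a, μ s₀ * (stateDist M π (fun x => if x = s₀ then (1:ℝ) else 0) t s
              * π s a * M.T s a s') := sum_rotate _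
        _ = ∑ s₀, μ s₀ * stateDist M π (fun x => if x = s₀ then (1:ℝ) else 0) (t+1) s' :=
            Finset.sum_congr rfl fun s₀ _ => (hre s₀).symm

lemma expRewardAt_linear (M : MDP S A) (π : S → A → ℝ) (μ : S → ℝ) (t : ℕ) :
    expRewardAt M π μ t =
      ∑ s₀, μ s₀ * expRewardAt M π (fun x => if x = s₀ then (1 : ℝ) else 0) t := by
  unfold expRewardAt
  have hre : ∀ s₀ : S, μ s₀ * (∑ s, ∑ a, stateDist M π (fun x => if x = s₀ then (1:ℝ) else 0) t s
        * π s a * M.r s a)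
      = ∑ s, ∑ a, μ s₀ * (stateDist M π (fun x => if x = s₀ then (1:ℝ) else 0) t s
        * π s a * M.r s a) := by
    intro s₀
    rw [Finset.mul_sum]
    exact Finset.sum_congr rfl fun s _ => by rw [Finset.mul_sum]
  calc ∑ s, ∑ a, stateDist M π μ t s * π s a * M.r s a
      = ∑ s, ∑ a, ∑ s₀, μ s₀ * (stateDist M π (fun x => if x = s₀ then (1:ℝ) else 0) t s
          * π s a * M.r s a) := by
        refine Finset.sum_congr rfl fun s _ => Finset.sum_congr rfl fun a _ => ?_
        rw [stateDist_linear M π μ t s, Finset.sum_mul, Finset.sum_mul]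
        exact Finset.sum_congr rfl fun s₀ _ => by ring
    _ = ∑ s₀, ∑ s, ∑ a, μ s₀ * (stateDist M π (fun x => if x = s₀ then (1:ℝ) else 0) t s
          * π s a * M.r s a) := sum_rotate _
    _ = ∑ s₀, μ s₀ * ∑ s, ∑ a, stateDist M π (fun x => if x = s₀ then (1:ℝ) else 0) t s
          * π s a * M.r s a := Finset.sum_congr rfl fun s₀ _ => (hre s₀).symm

lemma Gv_linear {M : MDP S A} {π : S → A → ℝ} {μ : S → ℝ}
    (hπ : IsPolicy π) (hT : IsKernel M.T) (hγ0 : 0 ≤ M.γ) (hγ1 : M.γ < 1) :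
    Gv M π μ = ∑ s₀, μ s₀ * Vval M π s₀ := by
  unfold Gv
  have h1 : ∀ t : ℕ, M.γ ^ t * expRewardAt M π μ t
      = ∑ s₀, μ s₀ * (M.γ ^ t * expRewardAt M π (fun x => if x = s₀ then (1:ℝ) else 0) t) := by
    intro t
    rw [expRewardAt_linear M π μ t, Finset.mul_sum]
    exact Finset.sum_congr rfl fun s₀ _ => by ring
  simp only [h1]
  rw [Summable.tsum_finsetSum (fun s₀ _ => Summable.mul_left _
    (summable_expReward hπ hT (delta_isDist s₀) hγ0 hγ1))]
  refine Finset.sum_congr rfl fun s₀ _ => ?_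
  rw [Vval_eq_Gv, Gv, tsum_mul_left]

lemma Gv_abs_le {M : MDP S A} {π : S → A → ℝ} {μ : S → ℝ} {δ : ℝ}
    (hπ : IsPolicy π) (hT : IsKernel M.T) (hμ : IsDist μ) (hγ0 : 0 ≤ M.γ) (hγ1 : M.γ < 1)
    (hV : ∀ s, |Vval M π s| ≤ δ) : |Gv M π μ| ≤ δ := by
  rw [Gv_linear hπ hT hγ0 hγ1]
  calc |∑ s₀, μ s₀ * Vval M π s₀| ≤ ∑ s₀, |μ s₀ * Vval M π s₀| := Finset.abs_sum_le_sum_abs _ _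
    _ ≤ ∑ s₀, μ s₀ * δ := by
        refine Finset.sum_le_sum fun s₀ _ => ?_
        rw [abs_mul, abs_of_nonneg (hμ.1 s₀)]
        exact mul_le_mul_of_nonneg_left (hV s₀) (hμ.1 s₀)
    _ = δ := by rw [← Finset.sum_mul, hμ.2, one_mul]

lemma expRewardAt_zero (M : MDP S A) (π : S → A → ℝ) (μ : S → ℝ) :
    expRewardAt M π μ 0 = ∑ s, ∑ a, μ s * π s a * M.r s a := rfl

lemma Gv_rec {M : MDP S A} {π : S → A → ℝ} {μ : S → ℝ}
    (hπ : IsPolicy π) (hT : IsKernel M.T) (hμ : IsDist μ) (hγ0 : 0 ≤ M.γ) (hγ1 : M.γ < 1) :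
    Gv M π μ = expRewardAt M π μ 0 + M.γ * Gv M π (mdpPush M π μ) := by
  unfold Gv
  rw [Summable.tsum_eq_zero_add (summable_expReward hπ hT hμ hγ0 hγ1)]
  simp only [pow_zero, one_mul]
  congr 1
  have h : ∀ t : ℕ, M.γ ^ (t + 1) * expRewardAt M π μ (t + 1)
      = M.γ * (M.γ ^ t * expRewardAt M π (mdpPush M π μ) t) := by
    intro t
    have : expRewardAt M π μ (t + 1) = expRewardAt M π (mdpPush M π μ) t := by
      unfold expRewardAt
      rw [stateDist_shift]
    rw [this, pow_succ]
    ring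
  simp only [h]
  rw [tsum_mul_left]

lemma sum_push_mul (M : MDP S A) (π : S → A → ℝ) (ν : S → ℝ) (f : S → ℝ) :
    ∑ s', mdpPush M π ν s' * f s'
      = ∑ s, ∑ a, ν s * π s a * (∑ s', M.T s a s' * f s') := by
  unfold mdpPush
  have h1 : ∀ s', (∑ s, ∑ a, ν s * π s a * M.T s a s') * f s'
      = ∑ s, ∑ a, ν s * π s a * M.T s a s' * f s' := by
    intro s'
    rw [Finset.sum_mul]
    exact Finset.sum_congr rfl fun s _ => by rw [Finset.sum_mul]
  simp only [h1]
  rw [triple_swap (fun s a s' => ν s * π s a * M.T s a s' * f s')]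
  refine Finset.sum_congr rfl fun s _ => Finset.sum_congr rfl fun a _ => ?_
  rw [Finset.mul_sum]
  exact Finset.sum_congr rfl fun s' _ => by ring

lemma le_tvFin {X : Type*} [Fintype X] (p q : X → ℝ) (E : Finset X) :
    |∑ x ∈ E, p x - ∑ x ∈ E, q x| ≤ tvFin p q :=
  le_ciSup (f := fun E : Finset X => |∑ x ∈ E, p x - ∑ x ∈ E, q x|)
    (Set.Finite.bddAbove (Set.finite_range _)) E

lemma tvFin_nonneg {X : Type*} [Fintype X] (p q : X → ℝ) : 0 ≤ tvFin p q := by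
  have := le_tvFin p q ∅
  simpa using this

lemma abs_expect_sub_le_tv {X : Type*} [Fintype X] {p q f : X → ℝ} {δ : ℝ}
    (hp0 : ∀ x, 0 ≤ p x) (hp1 : ∑ x, p x = 1) (hq0 : ∀ x, 0 ≤ q x) (hq1 : ∑ x, q x = 1)
    (hδ : 0 ≤ δ) (hf : ∀ x, |f x| ≤ δ) :
    |∑ x, p x * f x - ∑ x, q x * f x| ≤ 2 * δ * tvFin p q := by
  classical
  set E := Finset.univ.filter (fun x => q x ≤ p x) with hE
  set E' := Finset.univ.filter (fun x => ¬ q x ≤ p x) with hE'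
  have hsub : ∑ x, p x * f x - ∑ x, q x * f x = ∑ x, (p x - q x) * f x := by
    rw [← Finset.sum_sub_distrib]
    exact Finset.sum_congr rfl fun x _ => by ring
  have hsplit : ∑ x, (p x - q x) * f x
      = ∑ x ∈ E, (p x - q x) * f x + ∑ x ∈ E', (p x - q x) * f x :=
    (Finset.sum_filter_add_sum_filter_not _ _ _).symm
  have htot : ∑ x ∈ E, (p x - q x) + ∑ x ∈ E', (p x - q x) = 0 := by
    rw [Finset.sum_filter_add_sum_filter_not, Finset.sum_sub_distrib, hp1, hq1]
    ring
  set a := ∑ x ∈ E, (p x - q x) with ha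
  have ha0 : 0 ≤ a := Finset.sum_nonneg fun x hx => by
    have := (Finset.mem_filter.mp hx).2; linarith
  have hE'eq : ∑ x ∈ E', (p x - q x) = -a := by linarith
  have hb1 : |∑ x ∈ E, (p x - q x) * f x| ≤ δ * a := by
    calc |∑ x ∈ E, (p x - q x) * f x| ≤ ∑ x ∈ E, |(p x - q x) * f x| :=
          Finset.abs_sum_le_sum_abs _ _
      _ ≤ ∑ x ∈ E, (p x - q x) * δ := by
          refine Finset.sum_le_sum fun x hx => ?_
          have hx' := (Finset.mem_filter.mp hx).2
          rw [abs_mul, abs_of_nonneg (by linarith : (0:ℝ) ≤ p x - q x)]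
          exact mul_le_mul_of_nonneg_left (hf x) (by linarith)
      _ = δ * a := by rw [← Finset.sum_mul, ← ha]; ring
  have hb2 : |∑ x ∈ E', (p x - q x) * f x| ≤ δ * a := by
    calc |∑ x ∈ E', (p x - q x) * f x| ≤ ∑ x ∈ E', |(p x - q x) * f x| :=
          Finset.abs_sum_le_sum_abs _ _
      _ ≤ ∑ x ∈ E', (q x - p x) * δ := by
          refine Finset.sum_le_sum fun x hx => ?_
          have hx' := not_le.mp (Finset.mem_filter.mp hx).2
          rw [abs_mul, abs_of_nonpos (by linarith : p x - q x ≤ 0), neg_sub]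
          exact mul_le_mul_of_nonneg_left (hf x) (by linarith)
      _ = δ * a := by
          rw [← Finset.sum_mul]
          have : ∑ x ∈ E', (q x - p x) = a := by
            have : ∑ x ∈ E', (q x - p x) = -∑ x ∈ E', (p x - q x) := by
              rw [← Finset.sum_neg_distrib]
              exact Finset.sum_congr rfl fun x _ => by ring
            rw [this, hE'eq]; ring
          rw [this]; ring
  have hatv : a ≤ tvFin p q := by
    have h := le_tvFin p q E
    have : a = |∑ x ∈ E, p x - ∑ x ∈ E, q x| := by
      rw [← Finset.sum_sub_distrib, ← ha, abs_of_nonneg ha0]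
    rw [this]; exact h
  calc |∑ x, p x * f x - ∑ x, q x * f x|
      ≤ |∑ x ∈ E, (p x - q x) * f x| + |∑ x ∈ E', (p x - q x) * f x| := by
        rw [hsub, hsplit]; exact abs_add_le _ _
    _ ≤ δ * a + δ * a := add_le_add hb1 hb2
    _ ≤ 2 * δ * tvFin p q := by nlinarith [mul_le_mul_of_nonneg_left hatv hδ]

end AuxLemmas

/-- If two MDPs share the reward and `‖V^π_M‖_∞ ≤ δ`, then
`|J(π,M) - J(π,M̂)| ≤ (2γδ/(1-γ)) E_{(s,a) ∼ ρ^π_{M̂}}[d_TV(T(·|s,a), T̂(·|s,a))]`. -/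
theorem return_gap_le_tv (M Mhat : MDP S A) (π : S → A → ℝ) (μ₀ : S → ℝ) (δ : ℝ)
    (hr : M.r = Mhat.r) (hγ : M.γ = Mhat.γ) (hγ0 : 0 < M.γ) (hγ1 : M.γ < 1)
    (hπ : IsPolicy π) (hT : IsKernel M.T) (hThat : IsKernel Mhat.T) (hμ : IsDist μ₀)
    (hV : ∀ s, |Vval M π s| ≤ δ) :
    |Jval M π μ₀ - Jval Mhat π μ₀| ≤
      (2 * M.γ * δ / (1 - M.γ)) *
        ∑ s, ∑ a, occupancy Mhat π μ₀ s a * tvFin (M.T s a) (Mhat.T s a) := by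
  classical
  have hγ0' : (0:ℝ) ≤ M.γ := le_of_lt hγ0
  have hγh0 : (0:ℝ) ≤ Mhat.γ := hγ ▸ hγ0'
  have hγh1 : Mhat.γ < 1 := hγ ▸ hγ1
  have hS : Nonempty S := by
    by_contra h
    rw [not_nonempty_iff] at h
    have h2 := hμ.2
    rw [Finset.univ_eq_empty] at h2
    simp at h2
  have hδ0 : 0 ≤ δ := le_trans (abs_nonneg _) (hV (Classical.arbitrary S))
  set tv : S → A → ℝ := fun s a => tvFin (M.T s a) (Mhat.T s a) with htv
  set P : ℕ → S → ℝ := fun t => stateDist Mhat π μ₀ t with hP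
  have hPd : ∀ t, IsDist (P t) := fun t => stateDist_isDist hπ hThat hμ t
  have hpushM : ∀ t, IsDist (mdpPush M π (P t)) := fun t => mdpPush_isDist hπ hT (hPd t)
  have hpushMh : ∀ t, IsDist (mdpPush Mhat π (P t)) := fun t => mdpPush_isDist hπ hThat (hPd t)
  set Dt : ℕ → ℝ :=
    fun t => Gv M π (mdpPush M π (P t)) - Gv M π (mdpPush Mhat π (P t)) with hDt
  set u : ℕ → ℝ := fun t => M.γ ^ t * Gv M π (P t) with hu
  -- Bellman decomposition step
  have hstep : ∀ t, u t - u (t+1)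
      = M.γ ^ t * expRewardAt Mhat π μ₀ t + M.γ ^ (t+1) * Dt t := by
    intro t
    have h1 : Gv M π (P t) = expRewardAt M π (P t) 0 + M.γ * Gv M π (mdpPush M π (P t)) :=
      Gv_rec hπ hT (hPd t) hγ0' hγ1
    have h2 : expRewardAt M π (P t) 0 = expRewardAt Mhat π μ₀ t := by
      show ∑ s, ∑ a, stateDist M π (P t) 0 s * π s a * M.r s a = _
      rw [hr]; rfl
    have h3 : P (t+1) = mdpPush Mhat π (P t) := rfl
    simp only [hu, hDt, h3, h1, h2, pow_succ]
    ring
  -- summability facts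
  have sERh : Summable (fun t => M.γ ^ t * expRewardAt Mhat π μ₀ t) := by
    rw [hγ]
    exact summable_expReward hπ hThat hμ hγh0 hγh1
  have hDt2δ : ∀ t, |Dt t| ≤ 2 * δ := by
    intro t
    have b1 := Gv_abs_le hπ hT (hpushM t) hγ0' hγ1 hV
    have b2 := Gv_abs_le hπ hT (hpushMh t) hγ0' hγ1 hV
    calc |Dt t| ≤ |Gv M π (mdpPush M π (P t))| + |Gv M π (mdpPush Mhat π (P t))| := by
          rw [hDt]; exact abs_sub _ _
      _ ≤ 2 * δ := by linarith
  have sDt : Summable (fun t => M.γ ^ (t+1) * Dt t) := by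
    refine Summable.of_norm_bounded (g := fun t => (M.γ * (2*δ)) * M.γ ^ t)
      ((summable_geometric_of_lt_one hγ0' hγ1).mul_left _) (fun t => ?_)
    rw [Real.norm_eq_abs, abs_mul, abs_pow, abs_of_nonneg hγ0', pow_succ]
    calc M.γ ^ t * M.γ * |Dt t| ≤ M.γ ^ t * M.γ * (2*δ) :=
          mul_le_mul_of_nonneg_left (hDt2δ t) (by positivity)
      _ = M.γ * (2*δ) * M.γ ^ t := by ring
  -- telescoping
  have hfs : Summable (fun t => u t - u (t+1)) := by
    have heq : (fun t => u t - u (t+1))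
        = fun t => M.γ ^ t * expRewardAt Mhat π μ₀ t + M.γ ^ (t+1) * Dt t := funext hstep
    rw [heq]
    exact sERh.add sDt
  have hu0 : Filter.Tendsto u Filter.atTop (nhds 0) := by
    refine squeeze_zero_norm (a := fun n => M.γ ^ n * δ) (fun n => ?_) ?_
    · rw [hu, Real.norm_eq_abs, abs_mul, abs_pow, abs_of_nonneg hγ0']
      exact mul_le_mul_of_nonneg_left (Gv_abs_le hπ hT (hPd n) hγ0' hγ1 hV) (pow_nonneg hγ0' n)
    · have := (tendsto_pow_atTop_nhds_zero_of_lt_one hγ0' hγ1).mul_const δ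
      simpa using this
  have htel : ∑' t, (u t - u (t+1)) = u 0 := by
    have h1 := hfs.hasSum.tendsto_sum_nat
    have h2 : Filter.Tendsto (fun n => ∑ i ∈ Finset.range n, (u i - u (i+1)))
        Filter.atTop (nhds (u 0)) := by
      simp only [Finset.sum_range_sub' u]
      simpa using Filter.Tendsto.const_sub (u 0) hu0
    exact tendsto_nhds_unique h1 h2
  -- the key identity
  have hkey : Jval M π μ₀ - Jval Mhat π μ₀ = ∑' t, M.γ ^ (t+1) * Dt t := by
    have hJ1 : Jval M π μ₀ = Gv M π μ₀ := by
      rw [Jval, Gv_linear hπ hT hγ0' hγ1]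
    have hJ2 : Jval Mhat π μ₀ = ∑' t, M.γ ^ t * expRewardAt Mhat π μ₀ t := by
      rw [Jval, ← Gv_linear hπ hThat hγh0 hγh1, Gv, hγ]
    have hu0eq : u 0 = Gv M π μ₀ := by
      rw [hu]; simp [hP, stateDist]
    have hsplit : u 0 = (∑' t, M.γ ^ t * expRewardAt Mhat π μ₀ t)
        + ∑' t, M.γ ^ (t+1) * Dt t := by
      rw [← htel, ← Summable.tsum_add sERh sDt]
      exact tsum_congr hstep
    rw [hJ1, hJ2, ← hu0eq, hsplit]; ring
  -- pointwise TV bound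
  set Bt : ℕ → ℝ := fun t => ∑ s, ∑ a, P t s * π s a * (2 * δ * tv s a) with hBt
  have hDtB : ∀ t, |Dt t| ≤ Bt t := by
    intro t
    have e1 : Gv M π (mdpPush M π (P t)) = ∑ s', mdpPush M π (P t) s' * Vval M π s' :=
      Gv_linear hπ hT hγ0' hγ1
    have e2 : Gv M π (mdpPush Mhat π (P t)) = ∑ s', mdpPush Mhat π (P t) s' * Vval M π s' :=
      Gv_linear hπ hT hγ0' hγ1
    have e3 : Dt t = ∑ s, ∑ a, P t s * π s a *
        ((∑ s', M.T s a s' * Vval M π s') - (∑ s', Mhat.T s a s' * Vval M π s')) := by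
      rw [hDt]
      show Gv M π (mdpPush M π (P t)) - Gv M π (mdpPush Mhat π (P t)) = _
      rw [e1, e2, sum_push_mul, sum_push_mul, ← Finset.sum_sub_distrib]
      refine Finset.sum_congr rfl fun s _ => ?_
      rw [← Finset.sum_sub_distrib]
      exact Finset.sum_congr rfl fun a _ => by ring
    rw [e3, hBt]
    calc |∑ s, ∑ a, P t s * π s a *
          ((∑ s', M.T s a s' * Vval M π s') - (∑ s', Mhat.T s a s' * Vval M π s'))|
        ≤ ∑ s, ∑ a, |P t s * π s a *
          ((∑ s', M.T s a s' * Vval M π s') - (∑ s', Mhat.T s a s' * Vval M π s'))| := by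
          refine le_trans (Finset.abs_sum_le_sum_abs _ _) ?_
          exact Finset.sum_le_sum fun s _ => Finset.abs_sum_le_sum_abs _ _
      _ ≤ ∑ s, ∑ a, P t s * π s a * (2 * δ * tv s a) := by
          refine Finset.sum_le_sum fun s _ => Finset.sum_le_sum fun a _ => ?_
          rw [abs_mul, abs_of_nonneg (mul_nonneg ((hPd t).1 s) (hπ.1 s a))]
          refine mul_le_mul_of_nonneg_left ?_ (mul_nonneg ((hPd t).1 s) (hπ.1 s a))
          exact abs_expect_sub_le_tv (hT.1 s a) (hT.2 s a) (hThat.1 s a) (hThat.2 s a) hδ0 hV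
  -- summability of pieces for the swap
  have sB : ∀ s a, Summable (fun t => M.γ ^ (t+1) * (P t s * π s a * (2 * δ * tv s a))) := by
    intro s a
    refine Summable.of_norm_bounded (g := fun t => (M.γ * (π s a * (2 * δ * tv s a))) * M.γ ^ t)
      ((summable_geometric_of_lt_one hγ0' hγ1).mul_left _) (fun t => ?_)
    have htvn : 0 ≤ tv s a := tvFin_nonneg _ _
    have hc0 : 0 ≤ 2 * δ * tv s a := mul_nonneg (by linarith) htvn
    have hterm : 0 ≤ M.γ ^ (t+1) * (P t s * π s a * (2 * δ * tv s a)) :=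
      mul_nonneg (pow_nonneg hγ0' _)
        (mul_nonneg (mul_nonneg ((hPd t).1 s) (hπ.1 s a)) hc0)
    rw [Real.norm_eq_abs, abs_of_nonneg hterm, pow_succ]
    have hP1 : P t s ≤ 1 := isDist_le_one (hPd t) s
    have h0 : 0 ≤ π s a * (2 * δ * tv s a) := mul_nonneg (hπ.1 s a) hc0
    calc M.γ ^ t * M.γ * (P t s * π s a * (2 * δ * tv s a))
        ≤ M.γ ^ t * M.γ * (1 * (π s a * (2 * δ * tv s a))) := by
          refine mul_le_mul_of_nonneg_left ?_ (mul_nonneg (pow_nonneg hγ0' t) hγ0')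
          rw [one_mul, mul_assoc]
          exact mul_le_of_le_one_left h0 hP1
      _ = M.γ * (π s a * (2 * δ * tv s a)) * M.γ ^ t := by ring
  have h1B : ∀ t, M.γ ^ (t+1) * Bt t
      = ∑ s, ∑ a, M.γ ^ (t+1) * (P t s * π s a * (2 * δ * tv s a)) := by
    intro t
    rw [hBt]
    show M.γ ^ (t+1) * ∑ s, ∑ a, P t s * π s a * (2 * δ * tv s a) = _
    rw [Finset.mul_sum]
    exact Finset.sum_congr rfl fun s _ => by rw [Finset.mul_sum]
  have sBt : Summable (fun t => M.γ ^ (t+1) * Bt t) := by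
    have := summable_sum (s := (Finset.univ : Finset S))
      (fun s _ => summable_sum (s := (Finset.univ : Finset A)) (fun a _ => sB s a))
    exact this.congr fun t => (h1B t).symm
  -- the |tsum| bound
  rw [hkey]

  have hnrm : Summable (fun t => ‖M.γ ^ (t+1) * Dt t‖) := by
    refine Summable.of_norm_bounded (g := fun t => (M.γ * (2*δ)) * M.γ ^ t)
      ((summable_geometric_of_lt_one hγ0' hγ1).mul_left _) (fun t => ?_)
    rw [norm_norm, Real.norm_eq_abs, abs_mul, abs_pow, abs_of_nonneg hγ0', pow_succ]
    calc M.γ ^ t * M.γ * |Dt t| ≤ M.γ ^ t * M.γ * (2*δ) :=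
          mul_le_mul_of_nonneg_left (hDt2δ t) (by positivity)
      _ = M.γ * (2*δ) * M.γ ^ t := by ring
  have habs : |∑' t, M.γ ^ (t+1) * Dt t| ≤ ∑' t, M.γ ^ (t+1) * Bt t := by
    rw [← Real.norm_eq_abs]
    refine (norm_tsum_le_tsum_norm hnrm).trans ?_
    refine Summable.tsum_le_tsum (fun t => ?_) hnrm sBt
    rw [Real.norm_eq_abs, abs_mul, abs_pow, abs_of_nonneg hγ0']
    exact mul_le_mul_of_nonneg_left (hDtB t) (pow_nonneg hγ0' _)
  refine habs.trans (le_of_eq ?_)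
  have hswap : ∑' t, M.γ ^ (t+1) * Bt t
      = ∑ s, ∑ a, ∑' t, M.γ ^ (t+1) * (P t s * π s a * (2 * δ * tv s a)) := by
    rw [tsum_congr h1B, Summable.tsum_finsetSum (fun s _ => summable_sum (fun a _ => sB s a))]
    exact Finset.sum_congr rfl fun s _ => Summable.tsum_finsetSum (fun a _ => sB s a)
  have hinner : ∀ (s : S) (a : A), (∑' t, M.γ ^ (t+1) * (P t s * π s a * (2 * δ * tv s a)))
      = (M.γ * (π s a * (2 * δ * tv s a))) * ∑' t, M.γ ^ t * P t s := by
    intro s a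
    rw [← tsum_mul_left]
    exact tsum_congr fun t => by ring
  have hocc : ∀ (s : S) (a : A), occupancy Mhat π μ₀ s a
      = (1 - M.γ) * (∑' t, M.γ ^ t * P t s) * π s a := by
    intro s a
    simp only [occupancy, ← hγ, hP]
  have h1γ : (1 : ℝ) - M.γ ≠ 0 := by linarith
  rw [hswap, Finset.mul_sum]
  refine Finset.sum_congr rfl fun s _ => ?_
  rw [Finset.mul_sum]
  refine Finset.sum_congr rfl fun a _ => ?_
  rw [hinner s a, hocc s a]
  field_simp
  ring
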